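/- The infinite series ∑_{n=2}^∞ (1/32)^n · C(2n,n)·C(2n−3, n−2)·(2n−1)/n equals Γ(1/4)^2 / (8·π^{3/2}) − 9/32. -/

import Mathlib

open Real

section helpers
open MeasureTheory Set


lemma complex_eq_real_integrand {p q x : ℝ} (hx0 : 0 < x) (hx1 : x < 1) :
    (x:ℂ) ^ ((p:ℂ)-1) * (1-(x:ℂ)) ^ ((q:ℂ)-1) = ((x ^ (p-1) * (1-x) ^ (q-1) : ℝ) : ℂ) := by
  rw [show ((p:ℂ)-1) = ((p-1 : ℝ) : ℂ) by push_cast; ring,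
      show ((q:ℂ)-1) = ((q-1 : ℝ) : ℂ) by push_cast; ring,
      show (1 - (x:ℂ)) = ((1 - x : ℝ) : ℂ) by push_cast; ring,
      ← Complex.ofReal_cpow hx0.le, ← Complex.ofReal_cpow (by linarith), ← Complex.ofReal_mul]

/-- Real Beta integral: integrability. -/
lemma realBeta_integrableOn {p q : ℝ} (hp : 0 < p) (hq : 0 < q) :
    IntegrableOn (fun x : ℝ => x ^ (p-1) * (1-x) ^ (q-1)) (Ioo 0 1) := by
  have h := (Complex.betaIntegral_convergent (u := (p:ℂ)) (v := (q:ℂ)) (by simpa) (by simpa))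
  have h2 : IntegrableOn (fun x : ℝ => (x:ℂ) ^ ((p:ℂ)-1) * (1-(x:ℂ)) ^ ((q:ℂ)-1)) (Ioo 0 1) :=
    ((intervalIntegrable_iff_integrableOn_Ioc_of_le zero_le_one).mp h).mono_set
      Ioo_subset_Ioc_self
  have h3 : IntegrableOn (fun x : ℝ =>
      ((x:ℂ) ^ ((p:ℂ)-1) * (1-(x:ℂ)) ^ ((q:ℂ)-1)).re) (Ioo 0 1) := h2.re
  apply h3.congr_fun ?_ measurableSet_Ioo
  intro x hx
  simp only [complex_eq_real_integrand hx.1 hx.2, Complex.ofReal_re]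

lemma realBeta_eq {p q : ℝ} (hp : 0 < p) (hq : 0 < q) :
    ∫ x in Ioo (0:ℝ) 1, x ^ (p-1) * (1-x) ^ (q-1)
      = Real.Gamma p * Real.Gamma q / Real.Gamma (p+q) := by
  have h := Complex.Gamma_mul_Gamma_eq_betaIntegral (s := (p:ℂ)) (t := (q:ℂ)) (by simpa) (by simpa)
  have hpq : Real.Gamma (p+q) ≠ 0 := (Real.Gamma_pos_of_pos (by linarith)).ne'
  have hbeta : Complex.betaIntegral p q = ((∫ x in Ioo (0:ℝ) 1, x ^ (p-1) * (1-x) ^ (q-1) : ℝ) : ℂ) := by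
    rw [Complex.betaIntegral, intervalIntegral.integral_of_le zero_le_one,
        MeasureTheory.integral_Ioc_eq_integral_Ioo]
    rw [setIntegral_congr_fun measurableSet_Ioo (g := fun x : ℝ => ((x ^ (p-1) * (1-x) ^ (q-1) : ℝ) : ℂ))
      (fun x hx => complex_eq_real_integrand hx.1 hx.2)]
    exact integral_ofReal
  rw [hbeta, ← Complex.ofReal_add, Complex.Gamma_ofReal, Complex.Gamma_ofReal,
      Complex.Gamma_ofReal, ← Complex.ofReal_mul, ← Complex.ofReal_mul] at h
  have := Complex.ofReal_injective h
  field_simp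
  linarith [this]


lemma gamma_nat_add_half (n : ℕ) :
    Real.Gamma ((n:ℝ) + 1/2) = (Nat.choose (2*n) n : ℝ) * n.factorial * Real.sqrt π / 4^n := by
  induction n with
  | zero => simpa using Real.Gamma_one_half_eq
  | succ n ih =>
    have h : ((n:ℝ) + 1 + 1/2) = ((n:ℝ) + 1/2) + 1 := by ring
    rw [Nat.cast_succ, h, Real.Gamma_add_one (by positivity), ih]
    have hrec := Nat.succ_mul_centralBinom_succ n
    have hrec' : ((n+1 : ℕ) : ℝ) * ((2*(n+1)).choose (n+1) : ℝ)
        = 2 * (2*(n:ℝ)+1) * ((2*n).choose n : ℝ) := by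
      rw [← Nat.centralBinom, ← Nat.centralBinom]
      exact_mod_cast congrArg (Nat.cast : ℕ → ℝ) hrec
    have h4 : (4:ℝ)^(n+1) = 4 * 4^n := by ring
    rw [Nat.factorial_succ]
    push_cast at hrec' ⊢
    field_simp
    linear_combination (-2 * 4^n) * hrec'

lemma An (n : ℕ) : ∫ x in Ioo (0:ℝ) 1, x ^ ((n:ℝ) - 1/2) * (1-x) ^ (-(1/2):ℝ)
    = π * (Nat.choose (2*n) n : ℝ) / 4^n := by
  have := realBeta_eq (p := (n:ℝ) + 1/2) (q := 1/2) (by positivity) (by norm_num)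
  rw [show ((n:ℝ) + 1/2 - 1) = (n:ℝ) - 1/2 by ring, show ((1:ℝ)/2 - 1) = -(1/2) by ring,
    show ((n:ℝ) + 1/2 + 1/2) = (n:ℝ) + 1 by ring, Real.Gamma_nat_eq_factorial,
    Real.Gamma_one_half_eq, gamma_nat_add_half] at this
  rw [this]
  have hfac : (0:ℝ) < n.factorial := by exact_mod_cast Nat.factorial_pos n
  have hs : Real.sqrt π * Real.sqrt π = π := Real.mul_self_sqrt pi_pos.le
  field_simp
  linear_combination (((2*n).choose n : ℝ)) * hs


lemma rpow_neg_half {x : ℝ} (hx : 0 ≤ x) : x ^ (-(1/2):ℝ) = (Real.sqrt x)⁻¹ := by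
  rw [Real.rpow_neg hx, ← Real.sqrt_eq_rpow]

lemma image_rat_sq : (fun t : ℝ => t^2/(1+t^2)) '' (Ioi 0) = Ioo 0 1 := by
  ext s
  constructor
  · rintro ⟨t, ht, rfl⟩
    have h1 : (0:ℝ) < 1 + t^2 := by positivity
    have ht' : 0 < t := mem_Ioi.mp ht
    constructor
    · exact div_pos (pow_pos ht' 2) h1
    · rw [div_lt_one h1]; nlinarith
  · rintro ⟨hs0, hs1⟩
    refine ⟨Real.sqrt (s/(1-s)), ?_, ?_⟩
    · simp only [mem_Ioi]
      apply Real.sqrt_pos.mpr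
      have : 0 < 1 - s := by linarith
      positivity
    · have h1s : (0:ℝ) < 1 - s := by linarith
      show (Real.sqrt (s/(1-s)))^2/(1+(Real.sqrt (s/(1-s)))^2) = s
      rw [Real.sq_sqrt (by positivity)]
      field_simp
      ring
lemma I_eq {a : ℝ} (ha0 : 0 ≤ a) (ha1 : a < 1) :
    ∫ s in Ioo (0:ℝ) 1, s ^ (-(1/2):ℝ) * (1-s) ^ (-(1/2):ℝ) * (1 - a*s)⁻¹
      = π / Real.sqrt (1-a) := by
  have hsub := integral_image_eq_integral_abs_deriv_smul (f := fun t : ℝ => t^2/(1+t^2))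
    (f' := fun t : ℝ => 2*t/(1+t^2)^2) (measurableSet_Ioi (a := (0:ℝ)))
    (fun t ht => by
      have h1 : (1 + t^2) ≠ 0 := by positivity
      have : HasDerivAt (fun t : ℝ => t^2/(1+t^2)) (2*t/(1+t^2)^2) t := by
        have := (hasDerivAt_pow 2 t).div ((hasDerivAt_pow 2 t).const_add 1) h1
        refine this.congr_deriv ?_
        ring
      exact this.hasDerivWithinAt)
    (fun x hx y hy hxy => by
      simp only [mem_Ioi] at hx hy
      have h1 : (1 + x^2) ≠ 0 := by positivity
      have h2 : (1 + y^2) ≠ 0 := by positivity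
      field_simp at hxy
      nlinarith [hxy])
    (fun s => s ^ (-(1/2):ℝ) * (1-s) ^ (-(1/2):ℝ) * (1 - a*s)⁻¹)
  rw [image_rat_sq] at hsub
  rw [hsub]
  have key : ∀ t ∈ Ioi (0:ℝ), |2*t/(1+t^2)^2| • ((fun s => s ^ (-(1/2):ℝ) * (1-s) ^ (-(1/2):ℝ) * (1 - a*s)⁻¹) (t^2/(1+t^2)))
      = 2 * (1 + (1-a)*t^2)⁻¹ := by
    intro t ht
    have ht0 : 0 < t := mem_Ioi.mp ht
    have h1 : (0:ℝ) < 1 + t^2 := by positivity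
    have hs0 : (0:ℝ) < t^2/(1+t^2) := by positivity
    have hs1 : t^2/(1+t^2) < 1 := by rw [div_lt_one h1]; nlinarith
    have e1 : (t^2/(1+t^2)) ^ (-(1/2):ℝ) = Real.sqrt (1+t^2) / t := by
      rw [rpow_neg_half hs0.le, Real.sqrt_div (sq_nonneg t), Real.sqrt_sq ht0.le, inv_div]
    have e2 : (1 - t^2/(1+t^2)) ^ (-(1/2):ℝ) = Real.sqrt (1+t^2) := by
      have : 1 - t^2/(1+t^2) = (1+t^2)⁻¹ := by field_simp; ring
      rw [this, rpow_neg_half (by positivity), Real.sqrt_inv, inv_inv]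
    have e3 : (1 - a * (t^2/(1+t^2)))⁻¹ = (1+t^2) / (1 + (1-a)*t^2) := by
      rw [show 1 - a * (t^2/(1+t^2)) = (1 + (1-a)*t^2)/(1+t^2) by field_simp; ring, inv_div]
    have hsq : Real.sqrt (1+t^2) * Real.sqrt (1+t^2) = 1+t^2 := Real.mul_self_sqrt h1.le
    have hb : (0:ℝ) < 1 + (1-a)*t^2 := by nlinarith
    simp only [e1, e2, e3, smul_eq_mul, abs_of_pos (show (0:ℝ) < 2*t/(1+t^2)^2 by positivity)]
    field_simp
    ring_nf
    try nlinarith [hsq]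
    rw [Real.sq_sqrt h1.le]
    ring
  rw [setIntegral_congr_fun (measurableSet_Ioi) key]
  have hb : (0:ℝ) < Real.sqrt (1-a) := Real.sqrt_pos.mpr (by linarith)
  have hbsq : Real.sqrt (1-a) ^ 2 = 1-a := Real.sq_sqrt (by linarith)
  have comp := MeasureTheory.integral_comp_mul_left_Ioi (fun x : ℝ => 2 * (1 + x^2)⁻¹) 0 hb
  simp only [mul_zero] at comp
  have : ∀ t : ℝ, 2 * (1 + (1-a)*t^2)⁻¹ = (fun x : ℝ => 2 * (1 + x^2)⁻¹) (Real.sqrt (1-a) * t) := by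
    intro t
    simp only [mul_pow, hbsq]
  simp_rw [this]
  rw [comp]
  rw [MeasureTheory.integral_const_mul]
  simp only [integral_Ioi_inv_one_add_sq, Real.arctan_zero, sub_zero, smul_eq_mul]
  field_simp
  try ring


lemma centralBinom_le_four_pow (n : ℕ) : ((2*n).choose n) ≤ 4^n := by
  induction n with
  | zero => simp
  | succ n ih =>
    have h := Nat.succ_mul_centralBinom_succ n
    have h2 : (n+1) * (2*(n+1)).choose (n+1) ≤ (n+1) * (4 * (2*n).choose n) := by
      rw [← Nat.centralBinom, show (n+1) * (4 * (2*n).choose n) = (2*(2*n+1) + 2) * Nat.centralBinom n by rw [Nat.centralBinom]; ring, h]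
      have := Nat.centralBinom_pos n
      nlinarith [Nat.centralBinom_pos n]
    have h3 := Nat.le_of_mul_le_mul_left h2 (Nat.succ_pos n)
    calc (2*(n+1)).choose (n+1) ≤ 4 * (2*n).choose n := h3
    _ ≤ 4 * 4^n := by omega
    _ = 4^(n+1) := by ring

lemma cB_nonneg (n : ℕ) : (0:ℝ) ≤ ((2*n).choose n : ℝ)/4^n := by positivity

lemma cB_le_one (n : ℕ) : ((2*n).choose n : ℝ)/4^n ≤ 1 := by
  rw [div_le_one (by positivity)]
  exact_mod_cast centralBinom_le_four_pow n

lemma rpow_split (n : ℕ) {t : ℝ} (h0 : 0 < t) :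
    t ^ ((n:ℝ) - 1/2) = t^n * t ^ (-(1/2):ℝ) := by
  rw [show ((n:ℝ) - 1/2) = (n:ℝ) + (-(1/2)) by ring, Real.rpow_add h0, Real.rpow_natCast]

lemma tnB_integral (n : ℕ) :
    ∫ t in Ioo (0:ℝ) 1, (t:ℝ)^n * (t ^ (-(1/2):ℝ) * (1-t) ^ (-(1/2):ℝ))
      = π * (((2*n).choose n : ℝ)/4^n) := by
  rw [setIntegral_congr_fun measurableSet_Ioo (g := fun t : ℝ => t ^ ((n:ℝ) - 1/2) * (1-t) ^ (-(1/2):ℝ))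
    (fun t ht => by
      have h0 : (0:ℝ) < t := ht.1
      dsimp only
      rw [rpow_split n h0]
      ring)]
  rw [An n]; ring

lemma tnB_integrableOn (n : ℕ) :
    IntegrableOn (fun t : ℝ => (t:ℝ)^n * (t ^ (-(1/2):ℝ) * (1-t) ^ (-(1/2):ℝ))) (Ioo 0 1) := by
  apply (realBeta_integrableOn (p := (n:ℝ) + 1/2) (q := 1/2) (by positivity) (by norm_num)).congr_fun ?_ measurableSet_Ioo
  intro t ht
  have h0 : (0:ℝ) < t := ht.1
  dsimp only
  rw [show ((n:ℝ) + 1/2 - 1) = (n:ℝ) - 1/2 by ring, rpow_split n h0,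
    show ((1:ℝ)/2 - 1) = -(1/2) by norm_num]
  ring

lemma swap_gen {b : ℕ → ℝ} (hb0 : ∀ n, 0 ≤ b n) (hb1 : ∀ n, b n ≤ 1)
    {r : ℝ} (hr0 : 0 ≤ r) (hr1 : r < 1) :
    ∑' n : ℕ, b n * r^n * (π * (((2*n).choose n : ℝ)/4^n))
      = ∫ t in Ioo (0:ℝ) 1, (∑' n : ℕ, b n * (r*t)^n) * (t ^ (-(1/2):ℝ) * (1-t) ^ (-(1/2):ℝ)) := by
  set B : ℝ → ℝ := fun t => t ^ (-(1/2):ℝ) * (1-t) ^ (-(1/2):ℝ) with hB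
  have hint : ∀ n : ℕ, Integrable (fun t : ℝ => b n * (r*t)^n * B t) (volume.restrict (Ioo 0 1)) := by
    intro n
    have h := ((tnB_integrableOn n).const_mul (b n * r^n))
    apply IntegrableOn.congr_fun h ?_ measurableSet_Ioo
    intro t _
    simp only [mul_pow]
    ring
  have hval : ∀ n : ℕ, ∫ t in Ioo (0:ℝ) 1, b n * (r*t)^n * B t
      = b n * r^n * (π * (((2*n).choose n : ℝ)/4^n)) := by
    intro n
    rw [show (fun t : ℝ => b n * (r*t)^n * B t) = (fun t : ℝ => (b n * r^n) * (t^n * B t)) by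
      funext t; simp only [mul_pow]; ring]
    rw [integral_const_mul, tnB_integral n]
  have hnorm : ∀ n : ℕ, (∫ t in Ioo (0:ℝ) 1, ‖b n * (r*t)^n * B t‖)
      = b n * r^n * (π * (((2*n).choose n : ℝ)/4^n)) := by
    intro n
    rw [← hval n]
    apply setIntegral_congr_fun measurableSet_Ioo
    intro t ht
    have h0 : (0:ℝ) < t := ht.1
    have h1 : t < 1 := ht.2
    have hBpos : 0 ≤ B t :=
      mul_nonneg (Real.rpow_nonneg h0.le _) (Real.rpow_nonneg (by linarith) _)
    dsimp only
    rw [Real.norm_eq_abs, abs_of_nonneg]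
    exact mul_nonneg (mul_nonneg (hb0 n) (pow_nonneg (by nlinarith) n)) hBpos
  have hsum : Summable fun n : ℕ => ∫ t in Ioo (0:ℝ) 1, ‖b n * (r*t)^n * B t‖ := by
    refine Summable.of_nonneg_of_le (fun n => by
        rw [hnorm n]
        have := cB_nonneg n
        have := hb0 n
        positivity)
      (fun n => by
        rw [hnorm n]
        calc b n * r^n * (π * (((2*n).choose n : ℝ)/4^n)) ≤ 1 * r^n * (π * 1) := by
              apply mul_le_mul
              · apply mul_le_mul (hb1 n) le_rfl (pow_nonneg hr0 n) zero_le_one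
              · exact mul_le_mul le_rfl (cB_le_one n) (cB_nonneg n) pi_pos.le
              · positivity
              · positivity
          _ = π * r^n := by ring)
      ((summable_geometric_of_lt_one hr0 hr1).mul_left π)
  have key := integral_tsum_of_summable_integral_norm hint hsum
  simp_rw [hval] at key
  rw [key]
  congr 1
  funext t
  exact tsum_mul_right

lemma binom_series {x : ℝ} (hx0 : 0 ≤ x) (hx1 : x < 1) :
    ∑' n : ℕ, (((2*n).choose n : ℝ)/4^n) * x^n = (Real.sqrt (1-x))⁻¹ := by
  have h := swap_gen (b := fun _ => (1:ℝ)) (fun _ => zero_le_one) (fun _ => le_rfl) hx0 hx1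
  simp only [one_mul] at h
  have hL : ∑' n : ℕ, x^n * (π * (((2*n).choose n : ℝ)/4^n))
      = π * ∑' n : ℕ, (((2*n).choose n : ℝ)/4^n) * x^n := by
    rw [← tsum_mul_left]
    congr 1; funext n; ring
  have hR : ∫ t in Ioo (0:ℝ) 1, (∑' n : ℕ, (x*t)^n) * (t ^ (-(1/2):ℝ) * (1-t) ^ (-(1/2):ℝ))
      = π / Real.sqrt (1-x) := by
    rw [← I_eq hx0 hx1]
    apply setIntegral_congr_fun measurableSet_Ioo
    intro t ht
    have h0 : (0:ℝ) < t := ht.1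
    have h1 : t < 1 := ht.2
    dsimp only
    rw [tsum_geometric_of_lt_one (by nlinarith) (by nlinarith)]
    ring
  rw [hL, hR, div_eq_mul_inv] at h
  exact mul_left_cancel₀ pi_ne_zero h

lemma S_eq : ∑' n : ℕ, (((2*n).choose n : ℝ)/4^n)^2 * (1/2)^n
    = (1/π) * ∫ t in Ioo (0:ℝ) 1,
        (Real.sqrt (1-t/2))⁻¹ * (t ^ (-(1/2):ℝ) * (1-t) ^ (-(1/2):ℝ)) := by
  have h := swap_gen (b := fun n => ((2*n).choose n : ℝ)/4^n) cB_nonneg cB_le_one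
    (r := 1/2) (by norm_num) (by norm_num)
  have hL : ∑' n : ℕ, (((2*n).choose n : ℝ)/4^n) * (1/2)^n * (π * (((2*n).choose n : ℝ)/4^n))
      = π * ∑' n : ℕ, (((2*n).choose n : ℝ)/4^n)^2 * (1/2)^n := by
    rw [← tsum_mul_left]
    congr 1; funext n; ring
  have hR : ∫ t in Ioo (0:ℝ) 1, (∑' n : ℕ, (((2*n).choose n : ℝ)/4^n) * ((1/2)*t)^n) * (t ^ (-(1/2):ℝ) * (1-t) ^ (-(1/2):ℝ))
      = ∫ t in Ioo (0:ℝ) 1, (Real.sqrt (1-t/2))⁻¹ * (t ^ (-(1/2):ℝ) * (1-t) ^ (-(1/2):ℝ)) := by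
    apply setIntegral_congr_fun measurableSet_Ioo
    intro t ht
    have h0 : (0:ℝ) < t := ht.1
    have h1 : t < 1 := ht.2
    dsimp only
    rw [show (1/2)*t = t/2 by ring, binom_series (by linarith) (by linarith)]
  rw [hL, hR] at h
  rw [← h]
  rw [one_div π, inv_mul_cancel_left₀ pi_ne_zero]


lemma rpow_neg_half' {x : ℝ} (hx : 0 ≤ x) : x ^ (-(1/2):ℝ) = (Real.sqrt x)⁻¹ := by
  rw [Real.rpow_neg hx, ← Real.sqrt_eq_rpow]

lemma sqrt_lt_one' {u : ℝ} (hu0 : 0 < u) (hu1 : u < 1) : Real.sqrt u < 1 := by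
  rw [show (1:ℝ) = Real.sqrt 1 by simp]
  exact Real.sqrt_lt_sqrt hu0.le hu1

lemma image_one_sub_sqrt : (fun u : ℝ => 1 - Real.sqrt u) '' (Ioo 0 1) = Ioo (0:ℝ) 1 := by
  ext t
  constructor
  · rintro ⟨u, ⟨hu0, hu1⟩, rfl⟩
    have h1 : 0 < Real.sqrt u := Real.sqrt_pos.mpr hu0
    have h2 : Real.sqrt u < 1 := sqrt_lt_one' hu0 hu1
    exact ⟨by simp only; linarith, by simp only; linarith⟩
  · rintro ⟨ht0, ht1⟩
    refine ⟨(1-t)^2, ⟨pow_pos (by linarith) 2, by nlinarith⟩, ?_⟩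
    simp only
    rw [Real.sqrt_sq (by linarith)]
    ring

lemma point_eq {a : ℝ} (ha0 : 0 < a) (ha1 : a < 1) :
    (1/(2*a)) * ((Real.sqrt (1 - (1-a)/2))⁻¹ * ((1-a) ^ (-(1/2):ℝ) * (1 - (1-a)) ^ (-(1/2):ℝ)))
      = (Real.sqrt 2)⁻¹ * ((a^2) ^ ((1/4:ℝ)-1) * (1-a^2) ^ ((1/2:ℝ)-1)) := by
  have h1a : (0:ℝ) < 1 - a := by linarith
  have h1a' : (0:ℝ) < 1 + a := by linarith
  rw [show (1 - (1 - a)/2) = (1+a)/2 by ring,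
    rpow_neg_half' h1a.le, show (1 - (1-a)) = a by ring, rpow_neg_half' ha0.le]
  have e1 : (a^2:ℝ) ^ ((1/4:ℝ)-1) = (a * Real.sqrt a)⁻¹ := by
    rw [show ((1/4:ℝ)-1) = -(3/4) by norm_num,
      ← Real.rpow_natCast a 2, ← Real.rpow_mul ha0.le]
    rw [show ((2:ℕ):ℝ) * (-(3/4)) = -(3/2) by norm_num, Real.rpow_neg ha0.le]
    congr 1
    rw [show (3/2:ℝ) = 1 + 1/2 by norm_num, Real.rpow_add ha0, Real.rpow_one,
      ← Real.sqrt_eq_rpow]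
  have e2 : (1 - a^2:ℝ) ^ ((1/2:ℝ)-1) = (Real.sqrt (1-a) * Real.sqrt (1+a))⁻¹ := by
    rw [show ((1/2:ℝ)-1) = -(1/2) by norm_num, rpow_neg_half' (by nlinarith),
      show (1-a^2) = (1-a)*(1+a) by ring, Real.sqrt_mul h1a.le]
  rw [e1, e2]
  have s2 : Real.sqrt 2 * Real.sqrt 2 = 2 := Real.mul_self_sqrt (by norm_num)
  have sa : Real.sqrt a * Real.sqrt a = a := Real.mul_self_sqrt ha0.le
  have s1a : Real.sqrt (1-a) * Real.sqrt (1-a) = 1-a := Real.mul_self_sqrt h1a.le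
  have s1a' : Real.sqrt (1+a) * Real.sqrt (1+a) = 1+a := Real.mul_self_sqrt h1a'.le
  have hdiv : Real.sqrt ((1+a)/2) = Real.sqrt (1+a) / Real.sqrt 2 :=
    Real.sqrt_div h1a'.le 2
  rw [hdiv]
  have p1 : 0 < Real.sqrt 2 := by positivity
  have p2 : 0 < Real.sqrt a := Real.sqrt_pos.mpr ha0
  have p3 : 0 < Real.sqrt (1-a) := Real.sqrt_pos.mpr h1a
  have p4 : 0 < Real.sqrt (1+a) := Real.sqrt_pos.mpr h1a'
  field_simp
  linear_combination s2

lemma J_eq : ∫ t in Ioo (0:ℝ) 1, (Real.sqrt (1-t/2))⁻¹ * (t ^ (-(1/2):ℝ) * (1-t) ^ (-(1/2):ℝ))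
    = (Real.sqrt 2)⁻¹ * (Real.Gamma (1/4) * Real.Gamma (1/2) / Real.Gamma (3/4)) := by
  have hsub := integral_image_eq_integral_abs_deriv_smul (f := fun u : ℝ => 1 - Real.sqrt u)
    (f' := fun u : ℝ => -(1/(2 * Real.sqrt u))) (measurableSet_Ioo (a := (0:ℝ)) (b := 1))
    (fun u hu => by
      have h := (Real.hasDerivAt_sqrt (ne_of_gt hu.1)).const_sub 1
      simpa using h.hasDerivWithinAt)
    (fun a ha b hb hab => by
      simp only at hab
      have h : Real.sqrt a = Real.sqrt b := by linarith
      calc a = Real.sqrt a ^ 2 := (Real.sq_sqrt ha.1.le).symm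
      _ = Real.sqrt b ^ 2 := by rw [h]
      _ = b := Real.sq_sqrt hb.1.le)
    (fun t => (Real.sqrt (1-t/2))⁻¹ * (t ^ (-(1/2):ℝ) * (1-t) ^ (-(1/2):ℝ)))
  rw [image_one_sub_sqrt] at hsub
  rw [hsub]
  rw [setIntegral_congr_fun measurableSet_Ioo
    (g := fun u : ℝ => (Real.sqrt 2)⁻¹ * (u ^ ((1/4:ℝ)-1) * (1-u) ^ ((1/2:ℝ)-1)))
    ?_ ]
  · rw [integral_const_mul, realBeta_eq (by norm_num) (by norm_num)]
    norm_num
  · intro u hu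
    obtain ⟨a, ha0, ha1, rfl⟩ : ∃ a, 0 < a ∧ a < 1 ∧ u = a^2 :=
      ⟨Real.sqrt u, Real.sqrt_pos.mpr hu.1, sqrt_lt_one' hu.1 hu.2, (Real.sq_sqrt hu.1.le).symm⟩
    dsimp only
    rw [Real.sqrt_sq ha0.le, smul_eq_mul, abs_neg, abs_of_pos (by positivity)]
    exact point_eq ha0 ha1


lemma key_nat (m : ℕ) : 4*(2*m+3)*((2*m+1).choose m) = (m+2)*((2*m+4).choose (m+2)) := by
  have h := Nat.succ_mul_centralBinom_succ (m+1)
  have h2 : (2*(m+1)).choose (m+1) = 2 * ((2*m+1).choose m) := by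
    rw [show 2*(m+1) = (2*m+1)+1 by ring, Nat.choose_succ_succ' (2*m+1) m]
    have := Nat.choose_symm (show m+1 ≤ 2*m+1 by omega)
    rw [show 2*m+1-(m+1) = m by omega] at this
    omega
  rw [Nat.centralBinom, Nat.centralBinom, h2, show 2*(m+1+1) = 2*m+4 by ring,
    show m+1+1 = m+2 by ring] at h
  rw [h]
  ring

lemma S_value : ∑' n : ℕ, (((2*n).choose n : ℝ)/4^n)^2 * (1/2)^n
    = Real.Gamma (1/4)^2 / (2 * π ^ ((3:ℝ)/2)) := by
  rw [S_eq, J_eq]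
  have hrefl := Real.Gamma_mul_Gamma_one_sub (s := 1/4)
  rw [show (1:ℝ) - 1/4 = 3/4 by norm_num, show π * (1/4) = π/4 by ring, Real.sin_pi_div_four] at hrefl
  have hhalf : Real.Gamma (1/2) = Real.sqrt π := Real.Gamma_one_half_eq
  have hg14 : 0 < Real.Gamma (1/4) := Real.Gamma_pos_of_pos (by norm_num)
  have hg34 : 0 < Real.Gamma (3/4) := Real.Gamma_pos_of_pos (by norm_num)
  have hrp : π ^ ((3:ℝ)/2) = π * Real.sqrt π := by
    rw [show (3:ℝ)/2 = 1 + 1/2 by norm_num, Real.rpow_add pi_pos, Real.rpow_one,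
      ← Real.sqrt_eq_rpow]
  rw [hrp, hhalf]
  have s2 : Real.sqrt 2 * Real.sqrt 2 = 2 := Real.mul_self_sqrt (by norm_num)
  have sp : Real.sqrt π * Real.sqrt π = π := Real.mul_self_sqrt pi_pos.le
  have p1 : 0 < Real.sqrt 2 := by positivity
  have p2 : 0 < Real.sqrt π := Real.sqrt_pos.mpr pi_pos
  -- from hrefl : Gamma (1/4) * Gamma (3/4) = π / (√2/2)
  field_simp at hrefl ⊢
  -- now algebra
  linear_combination 2*sp - hrefl


end helpers

theorem stmt_19 :
    ∑' k : ℕ, (fun n : ℕ =>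
        (1/32 : ℝ) ^ n * (Nat.choose (2*n) n : ℝ) * (Nat.choose (2*n-3) (n-2) : ℝ)
          * (2*(n:ℝ)-1) / (n:ℝ)) (k + 2)
      = Real.Gamma (1/4) ^ 2 / (8 * Real.pi ^ ((3:ℝ)/2)) - 9/32 := by
  set g : ℕ → ℝ := fun n => (((2*n).choose n : ℝ)/4^n)^2 * (1/2)^n with hg
  have hgnn : ∀ n, 0 ≤ g n := fun n => by positivity
  have hgle : ∀ n, g n ≤ (1/2)^n := by
    intro n
    have h0 : (0:ℝ) ≤ ((2*n).choose n : ℝ)/4^n := by positivity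
    have h1 : ((2*n).choose n : ℝ)/4^n ≤ 1 := by
      rw [div_le_one (by positivity)]
      exact_mod_cast centralBinom_le_four_pow n
    calc g n ≤ 1 * (1/2)^n := by
          apply mul_le_mul_of_nonneg_right _ (by positivity)
          nlinarith
      _ = (1/2)^n := one_mul _
  have hS : Summable g := by
    refine Summable.of_nonneg_of_le hgnn hgle ?_
    exact summable_geometric_of_lt_one (by norm_num) (by norm_num)
  have hterm : ∀ k : ℕ, (fun n : ℕ =>
        (1/32 : ℝ) ^ n * (Nat.choose (2*n) n : ℝ) * (Nat.choose (2*n-3) (n-2) : ℝ)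
          * (2*(n:ℝ)-1) / (n:ℝ)) (k + 2) = (1/4) * g (k+2) := by
    intro k
    have h1 : 2*(k+2)-3 = 2*k+1 := by omega
    have h2 : (k+2)-2 = k := by omega
    have h3 : 2*(k+2) = 2*k+4 := by ring
    simp only [h1, h2, h3, hg]
    have keyR : (4:ℝ)*(2*(k:ℝ)+3)*(((2*k+1).choose k : ℕ):ℝ)
        = ((k:ℝ)+2)*(((2*k+4).choose (k+2) : ℕ):ℝ) := by
      exact_mod_cast key_nat k
    set C := (((2*k+4).choose (k+2) : ℕ):ℝ) with hC
    set D := (((2*k+1).choose k : ℕ):ℝ) with hD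
    have hP : ((32:ℝ))^(k+2) = (4^(k+2))^2 * 2^(k+2) := by
      rw [← pow_mul, mul_comm (k+2) 2, pow_mul, ← mul_pow]
      norm_num
    push_cast
    rw [div_eq_iff (by positivity : ((k:ℝ)+2) ≠ 0)]
    field_simp
    have hP' : (1/32:ℝ)^(k+2) * ((4:ℝ)^(k+2))^2 = (1/2)^(k+2) := by
      rw [← pow_mul, mul_comm (k+2) 2, pow_mul, ← mul_pow]
      norm_num
    rw [hD] at keyR
    linear_combination ((1/32:ℝ)^(k+2) * ((4:ℝ)^(k+2))^2 * C) * keyR + (C^2*((k:ℝ)+2)) * hP'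
  rw [tsum_congr hterm, tsum_mul_left]
  have htail := Summable.sum_add_tsum_nat_add 2 hS
  have hrange : ∑ i ∈ Finset.range 2, g i = 9/8 := by
    rw [Finset.sum_range_succ, Finset.sum_range_one, hg]
    norm_num [Nat.choose]
  have : ∑' (i : ℕ), g (i + 2) = (∑' n, g n) - 9/8 := by
    rw [← htail, hrange]; ring
  rw [this, S_value]
  have hp : (0:ℝ) < π ^ ((3:ℝ)/2) := Real.rpow_pos_of_pos pi_pos _
  field_simp
  ring
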